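/- Let H be a directed graph with h vertices such that every vertex of H lying in a source component of H has at least one outgoing edge in H. Let d ≥ 1 be an integer, ε ∈ (0,1), and let G be a directed graph on N vertices in which every vertex has out-degree at most d. If G is ε-far from being H-free, then G contains at least εN/h pairwise source-disjoint subgraphs isomorphic to H. -/

import Mathlib

open Finset

/-- Reachability inside a vertex subset `S` along edges of `E`. -/
def ReachIn {V : Type*} (E : Finset (V × V)) (S : Finset V) : V → V → Prop :=
  Relation.ReflTransGen (fun a b => a ∈ S ∧ b ∈ S ∧ (a, b) ∈ E)

/-- `S` is a source component of the digraph with edge set `E`: it is nonempty, the induced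
subgraph is strongly connected, and no edge enters `S` from outside. -/
def IsSourceComponent {V : Type*} (E : Finset (V × V)) (S : Finset V) : Prop :=
  S.Nonempty ∧ (∀ u ∈ S, ∀ v ∈ S, ReachIn E S u v) ∧
    ∀ u v, u ∉ S → v ∈ S → (u, v) ∉ E

open Classical in
/-- The union of all source components of the digraph on `Fin h` with edge set `E`. -/
noncomputable def sourceUnion {h : ℕ} (E : Finset (Fin h × Fin h)) : Finset (Fin h) :=
  Finset.univ.filter (fun v => ∃ S : Finset (Fin h), IsSourceComponent E S ∧ v ∈ S)

/-- `f` realizes a copy of the digraph `(Fin h, EH)` as a subgraph of `(Fin N, EG)`. -/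
def IsCopy {h N : ℕ} (EH : Finset (Fin h × Fin h)) (EG : Finset (Fin N × Fin N))
    (f : Fin h → Fin N) : Prop :=
  Function.Injective f ∧ ∀ a b : Fin h, (a, b) ∈ EH → (f a, f b) ∈ EG

/-- If `S` is closed under taking in-neighbours, then a global reachability path ending in `S`
stays in `S`. -/
lemma reachIn_of_closed {V : Type*} (E : Finset (V × V)) (S : Finset V)
    (hclosed : ∀ a b, (a, b) ∈ E → b ∈ S → a ∈ S) {u w : V}
    (hw : w ∈ S) (hr : Relation.ReflTransGen (fun a b => (a, b) ∈ E) u w) :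
    u ∈ S ∧ ReachIn E S u w := by
  induction hr using Relation.ReflTransGen.head_induction_on with
  | refl => exact ⟨hw, Relation.ReflTransGen.refl⟩
  | head hab _ ih =>
      refine ⟨hclosed _ _ hab ih.1, Relation.ReflTransGen.head ⟨hclosed _ _ hab ih.1, ih.1, hab⟩ ih.2⟩

/-- Every nonempty finite digraph has a source component. -/
lemma exists_sourceComponent {h : ℕ} (hh : 0 < h) (E : Finset (Fin h × Fin h)) :
    ∃ S : Finset (Fin h), IsSourceComponent E S := by
  classical
  set R : Fin h → Finset (Fin h) := fun v =>
    univ.filter (fun u => Relation.ReflTransGen (fun a b => (a, b) ∈ E) u v) with hR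
  obtain ⟨v, -, hmin⟩ := Finset.exists_min_image univ (fun v => (R v).card) ⟨⟨0, hh⟩, mem_univ _⟩
  have hmem : ∀ u x, u ∈ R x ↔ Relation.ReflTransGen (fun a b => (a, b) ∈ E) u x := by
    intro u x; simp [hR]
  have hclosed : ∀ a b, (a, b) ∈ E → b ∈ R v → a ∈ R v := by
    intro a b hab hb
    exact (hmem a v).2 (Relation.ReflTransGen.head hab ((hmem b v).1 hb))
  refine ⟨R v, ⟨v, (hmem v v).2 Relation.ReflTransGen.refl⟩, ?_, ?_⟩
  · intro u hu w hw
    -- R w = R v: R w ⊆ R v and minimality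
    have hsub : R w ⊆ R v := by
      intro x hx
      exact (hmem x v).2 ((hmem x w).1 hx |>.trans ((hmem w v).1 hw))
    have heq : R w = R v := Finset.eq_of_subset_of_card_le hsub (hmin w (mem_univ _))
    have huw : Relation.ReflTransGen (fun a b => (a, b) ∈ E) u w := by
      rw [← hmem u w, heq]; exact hu
    exact (reachIn_of_closed E (R v) hclosed hw huw).2
  · intro u w hu hw hE
    exact hu (hclosed u w hE hw)

theorem stmt0 (h d N : ℕ) (hh : 0 < h) (hd : 1 ≤ d) (hN : 0 < N)
    (ε : ℝ) (hε0 : 0 < ε) (hε1 : ε < 1)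
    (EH : Finset (Fin h × Fin h))
    -- every vertex of H lying in a source component of H has an outgoing edge in H
    (hout : ∀ v : Fin h, (∃ S : Finset (Fin h), IsSourceComponent EH S ∧ v ∈ S) →
      ∃ w : Fin h, (v, w) ∈ EH)
    (EG : Finset (Fin N × Fin N))
    -- every vertex of G has out-degree at most d
    (hdeg : ∀ v : Fin N, (EG.filter (fun e => e.1 = v)).card ≤ d)
    -- G is ε-far from H-freeness
    (hfar : ∀ EG' : Finset (Fin N × Fin N),
      (∀ f : Fin h → Fin N, ¬ IsCopy EH EG' f) →
      ε * d * N ≤ ((symmDiff EG EG').card : ℝ)) :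
    ∃ (m : ℕ) (f : Fin m → Fin h → Fin N),
      ε * N / h ≤ (m : ℝ) ∧
      (∀ i, IsCopy EH EG (f i)) ∧
      ∀ i j, i ≠ j →
        Disjoint ((sourceUnion EH).image (f i)) ((sourceUnion EH).image (f j)) := by
  classical
  set SU := sourceUnion EH with hSUdef
  -- SU is nonempty
  obtain ⟨S, hS⟩ := exists_sourceComponent hh EH
  obtain ⟨v₀, hv₀⟩ := hS.1
  have hSUne : SU.Nonempty := ⟨v₀, by simp [hSUdef, sourceUnion]; exact ⟨S, hS, hv₀⟩⟩
  have hSUmem : ∀ v : Fin h, v ∈ SU → ∃ S : Finset (Fin h), IsSourceComponent EH S ∧ v ∈ S := by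
    intro v hv
    simpa [hSUdef, sourceUnion] using hv
  -- copies of H in G
  set Copies : Finset (Fin h → Fin N) := univ.filter (fun g => IsCopy EH EG g) with hCop
  -- families of pairwise source-disjoint copies
  set 𝒜 : Finset (Finset (Fin h → Fin N)) :=
    Copies.powerset.filter (fun F => ∀ g₁ ∈ F, ∀ g₂ ∈ F, g₁ ≠ g₂ →
      Disjoint (SU.image g₁) (SU.image g₂)) with h𝒜
  have hempty : (∅ : Finset (Fin h → Fin N)) ∈ 𝒜 := by simp [h𝒜]
  obtain ⟨F, hFM⟩ := Finset.exists_maximal (s := 𝒜) ⟨∅, hempty⟩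
  have hF𝒜 : F ∈ 𝒜 := hFM.1
  have hFmax : ∀ x ∈ 𝒜, ¬ F < x := fun x hx hlt =>
    lt_irrefl _ (lt_of_lt_of_le hlt (hFM.2 hx hlt.le))
  have hFsub : F ⊆ Copies := by
    have := (Finset.mem_filter.1 hF𝒜).1; exact Finset.mem_powerset.1 this
  have hFpair : ∀ g₁ ∈ F, ∀ g₂ ∈ F, g₁ ≠ g₂ → Disjoint (SU.image g₁) (SU.image g₂) :=
    (Finset.mem_filter.1 hF𝒜).2
  -- every copy's source image intersects some member of F
  have hhit : ∀ g : Fin h → Fin N, IsCopy EH EG g →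
      ∃ g' ∈ F, ∃ x, x ∈ SU.image g ∧ x ∈ SU.image g' := by
    intro g hg
    by_cases hgF : g ∈ F
    · obtain ⟨x, hx⟩ := hSUne.image g
      exact ⟨g, hgF, x, hx, hx⟩
    · by_contra hcon
      push_neg at hcon
      have hdisj : ∀ g' ∈ F, Disjoint (SU.image g) (SU.image g') := by
        intro g' hg'
        rw [Finset.disjoint_left]
        intro x hx1 hx2
        exact hcon g' hg' x hx1 hx2
      have hins : insert g F ∈ 𝒜 := by
        rw [h𝒜, Finset.mem_filter, Finset.mem_powerset]
        constructor
        · intro a ha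
          rcases Finset.mem_insert.1 ha with rfl | ha
          · exact Finset.mem_filter.2 ⟨mem_univ _, hg⟩
          · exact hFsub ha
        · intro g₁ hg₁ g₂ hg₂ hne
          rcases Finset.mem_insert.1 hg₁ with rfl | hg₁'
          · rcases Finset.mem_insert.1 hg₂ with rfl | hg₂'
            · exact absurd rfl hne
            · exact hdisj g₂ hg₂'
          · rcases Finset.mem_insert.1 hg₂ with rfl | hg₂'
            · exact (hdisj g₁ hg₁').symm
            · exact hFpair g₁ hg₁' g₂ hg₂' hne
      exact hFmax _ hins (Finset.ssubset_insert hgF)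
  -- deleted vertex set
  set D : Finset (Fin N) := F.biUnion (fun g => SU.image g) with hD
  -- the pruned graph
  set EG' : Finset (Fin N × Fin N) := EG.filter (fun e => e.1 ∉ D) with hEG'
  -- EG' is H-free
  have hfree : ∀ g : Fin h → Fin N, ¬ IsCopy EH EG' g := by
    intro g hg
    have hgG : IsCopy EH EG g := by
      refine ⟨hg.1, fun a b hab => ?_⟩
      exact (Finset.mem_filter.1 (hg.2 a b hab)).1
    obtain ⟨g', hg'F, x, hx1, hx2⟩ := hhit g hgG
    have hxD : x ∈ D := Finset.mem_biUnion.2 ⟨g', hg'F, hx2⟩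
    obtain ⟨u, hu, rfl⟩ := Finset.mem_image.1 hx1
    obtain ⟨w, hw⟩ := hout u (hSUmem u hu)
    have := hg.2 u w hw
    exact (Finset.mem_filter.1 this).2 hxD
  -- cardinality bounds
  have hDcard : D.card ≤ F.card * h := by
    calc D.card ≤ ∑ g ∈ F, (SU.image g).card := Finset.card_biUnion_le
      _ ≤ ∑ _g ∈ F, h := by
          refine Finset.sum_le_sum fun g _ => ?_
          calc (SU.image g).card ≤ SU.card := Finset.card_image_le
            _ ≤ (univ : Finset (Fin h)).card := Finset.card_le_univ _
            _ = h := by simp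
      _ = F.card * h := by rw [Finset.sum_const, smul_eq_mul]
  have hEG'sub : EG' ⊆ EG := Finset.filter_subset _ _
  have hsymm : symmDiff EG EG' = EG.filter (fun e => e.1 ∈ D) := by
    rw [symmDiff_of_ge (Finset.le_iff_subset.2 hEG'sub), hEG']
    rw [Finset.filter_not]
    simp
  have hdel : (EG.filter (fun e => e.1 ∈ D)).card ≤ D.card * d := by
    have hbi : EG.filter (fun e => e.1 ∈ D) = D.biUnion (fun x => EG.filter (fun e => e.1 = x)) := by
      ext e
      simp only [Finset.mem_filter, Finset.mem_biUnion]
      constructor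
      · rintro ⟨he, hd⟩; exact ⟨e.1, hd, he, rfl⟩
      · rintro ⟨x, hx, he, rfl⟩; exact ⟨he, hx⟩
    rw [hbi]
    calc (D.biUnion fun x => EG.filter (fun e => e.1 = x)).card
        ≤ ∑ x ∈ D, (EG.filter (fun e => e.1 = x)).card := Finset.card_biUnion_le
      _ ≤ ∑ _x ∈ D, d := Finset.sum_le_sum fun x _ => hdeg x
      _ = D.card * d := by rw [Finset.sum_const, smul_eq_mul]
  have hkey : ε * d * N ≤ ((F.card * h * d : ℕ) : ℝ) := by
    calc ε * d * N ≤ ((symmDiff EG EG').card : ℝ) := hfar EG' hfree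
      _ ≤ ((F.card * h * d : ℕ) : ℝ) := by
          rw [hsymm]
          have : (EG.filter (fun e => e.1 ∈ D)).card ≤ F.card * h * d :=
            le_trans hdel (Nat.mul_le_mul_right d hDcard)
          exact_mod_cast this
  -- conclude ε N / h ≤ F.card
  have hd0 : (0 : ℝ) < d := by exact_mod_cast hd
  have hh0 : (0 : ℝ) < h := by exact_mod_cast hh
  have hεN : ε * N ≤ (F.card : ℝ) * h := by
    have : ε * N * d ≤ (F.card : ℝ) * h * d := by
      push_cast at hkey
      calc ε * N * d = ε * d * N := by ring
        _ ≤ (F.card : ℝ) * h * d := by push_cast at hkey ⊢; linarith [hkey]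
    exact le_of_mul_le_mul_right this hd0
  refine ⟨F.card, fun i => (F.equivFin.symm i : Fin h → Fin N), ?_, ?_, ?_⟩
  · rw [div_le_iff₀ hh0]; exact hεN
  · intro i
    have := hFsub (F.equivFin.symm i).2
    exact (Finset.mem_filter.1 this).2
  · intro i j hij
    apply hFpair _ (F.equivFin.symm i).2 _ (F.equivFin.symm j).2
    intro hval
    exact hij (F.equivFin.symm.injective (Subtype.ext hval))
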